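/- Let R > 0 and define θ(r,ε) = 2 arctan(r) + (r(1−r²)/(1+r²)²) ε for r > 0. Let A(r,ε) = R² sin²(θ(r,ε)) / r² and B(r,ε) = R² (1 + ε sin²(θ(r,ε))) (∂θ/∂r (r,ε))² be the angular and radial metric coefficients of the ellipsoid line element ds² = R² sin²θ dφ² + R²(1+ε sin²θ) dθ² in the coordinates (r,ψ) with φ = ψ. Then for every r > 0: A(r,0) = B(r,0) = 4R²/(1+r²)², and the ε-derivatives at ε = 0 agree: ∂A/∂ε(r,0) = ∂B/∂ε(r,0). Hence the coordinate change is conformal to first order in ε: A(r,ε) − B(r,ε) = O(ε²) for each fixed r. -/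

import Mathlib

open Real Asymptotics

/-- The perturbed coordinate change `θ(r,ε) = 2 arctan r + (r(1−r²)/(1+r²)²) ε`. -/
noncomputable def θf (r ε : ℝ) : ℝ :=
  2 * Real.arctan r + (r * (1 - r ^ 2) / (1 + r ^ 2) ^ 2) * ε

/-- Angular metric coefficient `A(r,ε) = R² sin²(θ(r,ε))/r²` of the ellipsoid line
element `ds² = R² sin²θ dφ² + R²(1+ε sin²θ) dθ²` in the coordinates `(r,ψ)`. -/
noncomputable def Acoef (R r ε : ℝ) : ℝ :=
  R ^ 2 * Real.sin (θf r ε) ^ 2 / r ^ 2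

/-- Radial metric coefficient `B(r,ε) = R²(1+ε sin²(θ(r,ε)))(∂θ/∂r)²`. -/
noncomputable def Bcoef (R r ε : ℝ) : ℝ :=
  R ^ 2 * (1 + ε * Real.sin (θf r ε) ^ 2) * (deriv (fun s => θf s ε) r) ^ 2

lemma analyticAt_rsin (x : ℝ) : AnalyticAt ℝ Real.sin x := by
  have h1 : AnalyticAt ℂ Complex.sin (x : ℂ) := Complex.differentiable_sin.analyticAt _
  have h2 : AnalyticAt ℝ (fun t : ℝ => Complex.sin t) x :=
    h1.restrictScalars.comp (Complex.ofRealCLM.analyticAt x)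
  have h3 : AnalyticAt ℝ (fun t : ℝ => (Complex.sin t).re) x :=
    (Complex.reCLM.analyticAt _).comp h2
  exact h3.congr (by filter_upwards with t; simp [Complex.sin_ofReal_re])

/-- For every `r > 0`: `A(r,0) = B(r,0) = 4R²/(1+r²)²`, the
`ε`-derivatives at `ε = 0` agree, and hence the coordinate change is conformal to first
order in `ε`: `A(r,ε) − B(r,ε) = O(ε²)` as `ε → 0` for each fixed `r`. -/
theorem first_order_conformality
    (R : ℝ) (hR : 0 < R) (r : ℝ) (hr : 0 < r) :
    Acoef R r 0 = 4 * R ^ 2 / (1 + r ^ 2) ^ 2 ∧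
    Bcoef R r 0 = 4 * R ^ 2 / (1 + r ^ 2) ^ 2 ∧
    deriv (fun ε => Acoef R r ε) 0 = deriv (fun ε => Bcoef R r ε) 0 ∧
    (fun ε => Acoef R r ε - Bcoef R r ε) =O[nhds 0] fun ε => ε ^ 2 := by
  have h0 : (0:ℝ) < 1 + r ^ 2 := by positivity
  have hr2 : (r:ℝ) ^ 2 ≠ 0 := by positivity
  have hs : Real.sqrt (1 + r ^ 2) ^ 2 = 1 + r ^ 2 := Real.sq_sqrt h0.le
  have hs0 : Real.sqrt (1 + r ^ 2) ≠ 0 := by positivity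
  -- trig values at 2 arctan r
  have hsin : Real.sin (2 * Real.arctan r) = 2 * r / (1 + r ^ 2) := by
    rw [Real.sin_two_mul, Real.sin_arctan, Real.cos_arctan]
    field_simp
    rw [hs]
  have hcos : Real.cos (2 * Real.arctan r) = (1 - r ^ 2) / (1 + r ^ 2) := by
    rw [Real.cos_two_mul, Real.cos_arctan]
    field_simp
    nlinarith [hs]
  have hθ0 : θf r 0 = 2 * Real.arctan r := by simp [θf]
  -- s-derivative
  set c : ℝ := r * (1 - r ^ 2) / (1 + r ^ 2) ^ 2 with hc
  set D : ℝ := (1 - 6 * r ^ 2 + r ^ 4) / (1 + r ^ 2) ^ 3 with hD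
  have hderiv_s : ∀ ε : ℝ, deriv (fun s => θf s ε) r = 2 / (1 + r ^ 2) + ε * D := by
    intro ε
    have hden : ((1 + r ^ 2) ^ 2 : ℝ) ≠ 0 := by positivity
    have h1 : HasDerivAt (fun s : ℝ => 2 * Real.arctan s) (2 * (1 / (1 + r ^ 2))) r :=
      (Real.hasDerivAt_arctan r).const_mul 2
    have hnum : HasDerivAt (fun s : ℝ => s * (1 - s ^ 2))
        (1 * (1 - r ^ 2) + r * (-(2 * r))) r :=
      (hasDerivAt_id r).mul (by simpa using ((hasDerivAt_pow 2 r).const_sub 1))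
    have hb : HasDerivAt (fun s : ℝ => (1 + s ^ 2) ^ 2) (2 * (1 + r ^ 2) * (2 * r)) r := by
      have : HasDerivAt (fun s : ℝ => 1 + s ^ 2) (2 * r) r := by
        simpa using ((hasDerivAt_pow 2 r).const_add 1)
      simpa using this.fun_pow 2
    have hq := hnum.div hb hden
    have htot := h1.add (hq.mul_const ε)
    have heq : deriv (fun s => θf s ε) r = _ := htot.deriv
    rw [heq, hD]
    field_simp
    ring
  -- rewrite Bcoef
  have hBeq : (fun ε => Bcoef R r ε)
      = fun ε => R ^ 2 * (1 + ε * Real.sin (θf r ε) ^ 2) * (2 / (1 + r ^ 2) + ε * D) ^ 2 := by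
    funext ε; rw [Bcoef, hderiv_s ε]
  -- values at 0
  have hA0 : Acoef R r 0 = 4 * R ^ 2 / (1 + r ^ 2) ^ 2 := by
    rw [Acoef, hθ0, hsin]; field_simp; ring
  have hB0 : Bcoef R r 0 = 4 * R ^ 2 / (1 + r ^ 2) ^ 2 := by
    have := congrFun hBeq 0
    rw [this]; field_simp; ring
  -- ε-derivatives
  have hθε : HasDerivAt (fun ε => θf r ε) c 0 := by
    simpa [θf, ← hc] using (((hasDerivAt_id (0:ℝ)).const_mul c).const_add (2 * Real.arctan r))
  have hsinθ : HasDerivAt (fun ε => Real.sin (θf r ε)) (Real.cos (θf r 0) * c) 0 := hθε.sin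
  have hsinsq : HasDerivAt (fun ε => Real.sin (θf r ε) ^ 2)
      (2 * Real.sin (θf r 0) ^ 1 * (Real.cos (θf r 0) * c)) 0 := by
    simpa using hsinθ.fun_pow 2
  have hA' : HasDerivAt (fun ε => Acoef R r ε)
      (R ^ 2 * (2 * Real.sin (θf r 0) ^ 1 * (Real.cos (θf r 0) * c)) / r ^ 2) 0 := by
    simpa [Acoef] using (hsinsq.const_mul (R ^ 2)).div_const (r ^ 2)
  have hinner1 : HasDerivAt (fun ε : ℝ => 1 + ε * Real.sin (θf r ε) ^ 2)
      (1 * Real.sin (θf r 0) ^ 2 +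
        0 * (2 * Real.sin (θf r 0) ^ 1 * (Real.cos (θf r 0) * c))) 0 := by
    simpa using ((hasDerivAt_id (0:ℝ)).mul hsinsq).const_add 1
  have hinner2 : HasDerivAt (fun ε : ℝ => (2 / (1 + r ^ 2) + ε * D) ^ 2)
      (2 * (2 / (1 + r ^ 2) + 0 * D) ^ 1 * (1 * D)) 0 := by
    have h2 : HasDerivAt (fun ε : ℝ => 2 / (1 + r ^ 2) + ε * D) (1 * D) 0 :=
      ((hasDerivAt_id (0:ℝ)).mul_const D).const_add _
    simpa using h2.fun_pow 2
  have hB' : HasDerivAt (fun ε => Bcoef R r ε)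
      ((R ^ 2 * (1 * Real.sin (θf r 0) ^ 2 +
          0 * (2 * Real.sin (θf r 0) ^ 1 * (Real.cos (θf r 0) * c)))) *
          (2 / (1 + r ^ 2) + 0 * D) ^ 2
        + (R ^ 2 * (1 + 0 * Real.sin (θf r 0) ^ 2)) *
          (2 * (2 / (1 + r ^ 2) + 0 * D) ^ 1 * (1 * D))) 0 := by
    rw [hBeq]
    exact (hinner1.const_mul (R ^ 2)).mul hinner2
  have hkey : R ^ 2 * (2 * Real.sin (θf r 0) ^ 1 * (Real.cos (θf r 0) * c)) / r ^ 2
      = (R ^ 2 * (1 * Real.sin (θf r 0) ^ 2 +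
          0 * (2 * Real.sin (θf r 0) ^ 1 * (Real.cos (θf r 0) * c)))) *
          (2 / (1 + r ^ 2) + 0 * D) ^ 2
        + (R ^ 2 * (1 + 0 * Real.sin (θf r 0) ^ 2)) *
          (2 * (2 / (1 + r ^ 2) + 0 * D) ^ 1 * (1 * D)) := by
    rw [hθ0, hsin, hcos, hc, hD]
    field_simp
    ring
  have hderivAB : deriv (fun ε => Acoef R r ε) 0 = deriv (fun ε => Bcoef R r ε) 0 := by
    rw [hA'.deriv, hB'.deriv, hkey]
  refine ⟨hA0, hB0, hderivAB, ?_⟩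
  -- Big-O part
  have hg0 : Acoef R r 0 - Bcoef R r 0 = 0 := by rw [hA0, hB0, sub_self]
  have hg' : HasDerivAt (fun ε => Acoef R r ε - Bcoef R r ε) 0 0 := by
    have := hA'.sub hB'
    rwa [hkey, sub_self] at this
  -- analyticity
  have hθan : AnalyticAt ℝ (fun ε => θf r ε) 0 := by
    unfold θf
    exact analyticAt_const.add (analyticAt_const.mul (analyticAt_id))
  have hsinan : AnalyticAt ℝ (fun ε => Real.sin (θf r ε)) 0 :=
    (analyticAt_rsin _).comp hθan
  have hAan : AnalyticAt ℝ (fun ε => Acoef R r ε) 0 := by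
    unfold Acoef
    exact ((analyticAt_const.mul (hsinan.pow 2)).div analyticAt_const (by simpa using hr2))
  have hBan : AnalyticAt ℝ (fun ε => Bcoef R r ε) 0 := by
    rw [hBeq]
    exact (analyticAt_const.mul
      (analyticAt_const.add (analyticAt_id.mul (hsinan.pow 2)))).mul
      ((analyticAt_const.add (analyticAt_id.mul analyticAt_const)).pow 2)
  obtain ⟨p, hp⟩ := hAan.sub hBan
  have hfg : ((fun ε => Acoef R r ε) - fun ε => Bcoef R r ε)
      = fun ε => Acoef R r ε - Bcoef R r ε := rfl
  rw [hfg] at hp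
  have hc0' : p.coeff 0 = 0 := by
    have h : p.coeff 0 = Acoef R r 0 - Bcoef R r 0 := hp.coeff_zero 1
    rw [h, hg0]
  have hc1' : p.coeff 1 = 0 := by
    have hd : deriv (fun ε => Acoef R r ε - Bcoef R r ε) 0 = p.coeff 1 := hp.deriv
    rw [hg'.deriv] at hd
    exact hd.symm
  have hps : ∀ y : ℝ, p.partialSum 2 y = 0 := by
    intro y
    simp [FormalMultilinearSeries.partialSum, Finset.sum_range_succ, hc0', hc1']
  have hbig := hp.isBigO_sub_partialSum_pow 2
  have hbig2 : (fun ε => Acoef R r ε - Bcoef R r ε) =O[nhds 0] fun y : ℝ => ‖y‖ ^ 2 := by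
    refine hbig.congr' ?_ (by rfl)
    filter_upwards with y
    simp [hps y]
  exact hbig2.trans (by
    apply IsBigO.of_bound 1
    filter_upwards with y
    simp [abs_pow, sq_abs])
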